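/- (Lemma A.2 / Corollary 2.16, case i ≤ L < j: momentum-space IBP operators are parametric annihilators.) With the full matrix data below: for all 1 ≤ i ≤ L and L < j ≤ M, one has Σ_{a,b=1}^{N} C^{bi}_{aj} · x_a · (∂_b 𝒢 − λ_b·𝒰) = −𝒰 · Σ_{a=1}^{N} Σ_{m=L+1}^{M} A_a^{{i,m}} · g_{jm} · x_a, as an identity in the polynomial ring ℂ[x_1,…,x_N]. (This polynomial identity is exactly the statement that the parametric IBP operator P̂_{ij} of eq. (2.24) annihilates 𝒢^{−d/2}.) -/
import Mathlib


open Finset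

noncomputable section

/-- Kronecker delta, valued in `ℂ`. -/
def kd {α : Type*} [DecidableEq α] (i j : α) : ℂ := if i = j then 1 else 0

/-- Embedding of the loop indices `{1,…,L}` into `{1,…,M}`, `M = L + E`. -/
abbrev li {L : ℕ} (E : ℕ) (i : Fin L) : Fin (L + E) := Fin.castAdd E i

/-- Embedding of the external indices `{L+1,…,M}` into `{1,…,M}`. -/
abbrev xi (L : ℕ) {E : ℕ} (r : Fin E) : Fin (L + E) := Fin.natAdd L r

/-- The symmetric `L×L` matrix `Λ(x)` with entries
`Λ_{ij} = −((1+δ_{ij})/2)·Σ_a x_a·A_a^{{i,j}}`. -/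
def LamMat {L E n : ℕ} (A : Fin n → Fin (L + E) → Fin (L + E) → ℂ) :
    Matrix (Fin L) (Fin L) (MvPolynomial (Fin n) ℂ) := fun i j =>
  MvPolynomial.C (-(1 + kd i j) / 2) *
    ∑ a, MvPolynomial.C (A a (li E i) (li E j)) * MvPolynomial.X a

/-- The coefficients `C^{bi}_{aj}` of the momentum-space IBP relations:
`C^{bi}_{aj} = Σ_{m=1}^{M} A_a^{{i,m}} A^b_{{m,j}} (1+δ_{mi})` for `j ≤ L`, and
`C^{bi}_{aj} = Σ_{m=1}^{L} A_a^{{i,m}} A^b_{{m,j}} (1+δ_{mi})` for `j > L`. -/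
def Cc {L E n : ℕ} (A : Fin n → Fin (L + E) → Fin (L + E) → ℂ)
    (B : Fin (L + E) → Fin (L + E) → Fin n → ℂ)
    (b : Fin n) (i : Fin L) (a : Fin n) (j : Fin (L + E)) : ℂ :=
  if (j : ℕ) < L then
    ∑ m : Fin (L + E), A a (li E i) m * B m j b * (1 + kd m (li E i))
  else
    ∑ m ∈ univ.filter (fun m : Fin (L + E) => (m : ℕ) < L),
      A a (li E i) m * B m j b * (1 + kd m (li E i))

/-- The `L×L` matrix `S` with entries
`S_{ij} = (1/4)·Σ_{a,b} Σ_{r,s>L} g_{rs}·A_a^{{i,r}}·A_b^{{j,s}}·x_a·x_b`. -/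
def SMat {L E n : ℕ} (A : Fin n → Fin (L + E) → Fin (L + E) → ℂ)
    (g : Fin E → Fin E → ℂ) :
    Matrix (Fin L) (Fin L) (MvPolynomial (Fin n) ℂ) := fun i j =>
  MvPolynomial.C ((1 : ℂ) / 4) * ∑ a, ∑ b, ∑ r, ∑ s,
    MvPolynomial.C (g r s * A a (li E i) (xi L r) * A b (li E j) (xi L s)) *
      (MvPolynomial.X a * MvPolynomial.X b)

/-- `J = Σ_a λ_a x_a`. -/
def Jpoly {n : ℕ} (lam : Fin n → ℂ) : MvPolynomial (Fin n) ℂ :=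
  ∑ a, MvPolynomial.C (lam a) * MvPolynomial.X a

/-- The second Symanzik polynomial
`ℱ = Σ_{i,j} (adjugate Λ)_{ij}·S_{ji} + 𝒰·J`. -/
def Fpoly {L E n : ℕ} (A : Fin n → Fin (L + E) → Fin (L + E) → ℂ)
    (g : Fin E → Fin E → ℂ) (lam : Fin n → ℂ) : MvPolynomial (Fin n) ℂ :=
  (∑ i, ∑ j, (LamMat A).adjugate i j * SMat A g j i) + (LamMat A).det * Jpoly lam

/-- The Lee–Pomeransky polynomial `𝒢 = 𝒰 + ℱ`. -/
def Gpoly {L E n : ℕ} (A : Fin n → Fin (L + E) → Fin (L + E) → ℂ)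
    (g : Fin E → Fin E → ℂ) (lam : Fin n → ℂ) : MvPolynomial (Fin n) ℂ :=
  (LamMat A).det + Fpoly A g lam


section DopSection
open MvPolynomial

/-- The derivation `D c p = Σ_b c_b ∂_b p`. -/
noncomputable def Dop {n : ℕ} (c : Fin n → ℂ) (p : MvPolynomial (Fin n) ℂ) : MvPolynomial (Fin n) ℂ :=
  ∑ b, MvPolynomial.C (c b) * MvPolynomial.pderiv b p

lemma Dop_add {n : ℕ} (c : Fin n → ℂ) (p q : MvPolynomial (Fin n) ℂ) :
    Dop c (p + q) = Dop c p + Dop c q := by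
  simp [Dop, mul_add, Finset.sum_add_distrib]

lemma Dop_C {n : ℕ} (c : Fin n → ℂ) (r : ℂ) : Dop c (MvPolynomial.C r) = 0 := by
  simp [Dop]

lemma Dop_mul {n : ℕ} (c : Fin n → ℂ) (p q : MvPolynomial (Fin n) ℂ) :
    Dop c (p * q) = p * Dop c q + q * Dop c p := by
  simp only [Dop, MvPolynomial.pderiv_mul, mul_add, Finset.sum_add_distrib, Finset.mul_sum]
  rw [add_comm]
  congr 1 <;> exact Finset.sum_congr rfl fun b _ => by ring

lemma Dop_sum {n : ℕ} (c : Fin n → ℂ) {α : Type*} (s : Finset α)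
    (f : α → MvPolynomial (Fin n) ℂ) :
    Dop c (∑ a ∈ s, f a) = ∑ a ∈ s, Dop c (f a) := by
  simp only [Dop, Finset.mul_sum]
  rw [Finset.sum_comm]
  exact Finset.sum_congr rfl fun a _ => by simp [map_sum, Finset.mul_sum]

lemma Dop_X {n : ℕ} (c : Fin n → ℂ) (a : Fin n) :
    Dop c (MvPolynomial.X a) = MvPolynomial.C (c a) := by
  simp [Dop, MvPolynomial.pderiv_X, Pi.single_apply]

lemma Dop_smul {n : ℕ} (c : Fin n → ℂ) (z : ℂ) (p : MvPolynomial (Fin n) ℂ) :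
    Dop c (MvPolynomial.C z * p) = MvPolynomial.C z * Dop c p := by
  rw [Dop_mul, Dop_C]
  ring

/-- A derivation vanishing on a set vanishes on its adjoin. -/
lemma Dop_zero_of_adjoin {n : ℕ} (c : Fin n → ℂ) {s : Set (MvPolynomial (Fin n) ℂ)}
    (h : ∀ p ∈ s, Dop c p = 0) {x} (hx : x ∈ Algebra.adjoin ℂ s) : Dop c x = 0 := by
  induction hx using Algebra.adjoin_induction with
  | mem p hp => exact h p hp
  | algebraMap r => simpa [MvPolynomial.algebraMap_eq] using Dop_C c r
  | add p q hp hq ihp ihq => rw [Dop_add, ihp, ihq, add_zero]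
  | mul p q hp hq ihp ihq => rw [Dop_mul, ihp, ihq, mul_zero, mul_zero, add_zero]

lemma det_mem_subalgebra {R : Type*} [CommRing R] {m : Type*} [Fintype m] [DecidableEq m]
    (M : Matrix m m R) (S : Subring R) (h : ∀ p q, M p q ∈ S) : M.det ∈ S := by
  rw [Matrix.det_apply]
  refine Subring.sum_mem S fun σ _ => ?_
  rw [Units.smul_def, zsmul_eq_mul]
  exact S.mul_mem (intCast_mem S _) (Subring.prod_mem S fun i _ => h _ _)

lemma adjugate_mem_subalgebra {R : Type*} [CommRing R] {m : Type*} [Fintype m] [DecidableEq m]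
    (M : Matrix m m R) (S : Subring R) (h : ∀ p q, M p q ∈ S) (i j : m) :
    M.adjugate i j ∈ S := by
  rw [Matrix.adjugate_apply]
  refine det_mem_subalgebra _ S fun p q => ?_
  rw [Matrix.updateRow_apply]
  split
  · rw [Pi.single_apply]; split
    · exact S.one_mem
    · exact S.zero_mem
  · exact h _ _

end DopSection

section Main
open MvPolynomial
variable {L E n : ℕ}

def cB (B : Fin (L+E) → Fin (L+E) → Fin n → ℂ) (j : Fin E) (m : Fin L) : Fin n → ℂ :=
  fun b => B (li E m) (xi L j) b

noncomputable def Vp (A : Fin n → Fin (L+E) → Fin (L+E) → ℂ) (g : Fin E → Fin E → ℂ) (j : Fin E)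
    (k : Fin L) : MvPolynomial (Fin n) ℂ :=
  ∑ s, ∑ b, MvPolynomial.C (g j s * A b (li E k) (xi L s)) * MvPolynomial.X b

lemma xi_ne_li {j : Fin E} {q : Fin L} : xi L j ≠ li E q := by
  simp only [ne_eq, Fin.ext_iff, Fin.coe_natAdd, Fin.coe_castAdd]
  have := q.isLt
  omega

variable {A : Fin n → Fin (L+E) → Fin (L+E) → ℂ} {B : Fin (L+E) → Fin (L+E) → Fin n → ℂ}
  {g : Fin E → Fin E → ℂ} {lam : Fin n → ℂ}

def BAhyp (A : Fin n → Fin (L+E) → Fin (L+E) → ℂ) (B : Fin (L+E) → Fin (L+E) → Fin n → ℂ) : Prop :=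
  ∀ i j k l : Fin (L + E), ((i : ℕ) < L ∨ (j : ℕ) < L) →
      ((k : ℕ) < L ∨ (l : ℕ) < L) →
      ∑ a, B i j a * A a k l = if (i = k ∧ j = l) ∨ (i = l ∧ j = k) then 1 else 0

lemma hBA_loop (hBA : BAhyp A B) (j : Fin E) (m p q : Fin L) :
    ∑ a, B (li E m) (xi L j) a * A a (li E p) (li E q) = 0 := by
  rw [hBA _ _ _ _ (Or.inl m.isLt) (Or.inl p.isLt)]
  rw [if_neg]
  rintro (⟨-, h⟩ | ⟨-, h⟩)
  · exact xi_ne_li h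
  · exact xi_ne_li h

lemma hBA_ext (hBA : BAhyp A B) (j : Fin E) (m k : Fin L) (s : Fin E) :
    ∑ a, B (li E m) (xi L j) a * A a (li E k) (xi L s)
      = if m = k ∧ j = s then 1 else 0 := by
  rw [hBA _ _ _ _ (Or.inl m.isLt) (Or.inl k.isLt)]
  congr 1
  simp only [eq_iff_iff]
  constructor
  · rintro (⟨h1, h2⟩ | ⟨h1, -⟩)
    · have h1' : (m : ℕ) = k := by simpa [Fin.ext_iff] using h1
      have h2' : (j : ℕ) = s := by simp only [Fin.ext_iff, Fin.coe_natAdd] at h2; omega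
      exact ⟨Fin.ext h1', Fin.ext h2'⟩
    · exact absurd h1.symm xi_ne_li
  · rintro ⟨h1, h2⟩
    exact Or.inl ⟨by rw [h1], by rw [h2]⟩

lemma Dop_Lam (hBA : BAhyp A B) (j : Fin E) (m p q : Fin L) :
    Dop (cB B j m) (LamMat A p q) = 0 := by
  unfold LamMat
  rw [Dop_smul, Dop_sum]
  have h : ∀ a : Fin n, Dop (cB B j m) (MvPolynomial.C (A a (li E p) (li E q)) * X a)
      = MvPolynomial.C (B (li E m) (xi L j) a * A a (li E p) (li E q)) := fun a => by
    rw [Dop_smul, Dop_X, ← map_mul]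
    congr 1
    unfold cB
    ring
  rw [Finset.sum_congr rfl fun a _ => h a, ← map_sum, hBA_loop hBA j m p q]
  simp

lemma Dop_det (hBA : BAhyp A B) (j : Fin E) (m : Fin L) :
    Dop (cB B j m) (LamMat A).det = 0 := by
  have hmem : (LamMat A).det ∈ (Algebra.adjoin ℂ
      (Set.range (fun pq : Fin L × Fin L => LamMat A pq.1 pq.2))).toSubring :=
    det_mem_subalgebra _ _ fun p q => Algebra.subset_adjoin (Set.mem_range_self (p, q))
  exact Dop_zero_of_adjoin _ (by rintro _ ⟨⟨p, q⟩, rfl⟩; exact Dop_Lam hBA j m p q) hmem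

lemma Dop_adj (hBA : BAhyp A B) (j : Fin E) (m k l : Fin L) :
    Dop (cB B j m) ((LamMat A).adjugate k l) = 0 := by
  have hmem : (LamMat A).adjugate k l ∈ (Algebra.adjoin ℂ
      (Set.range (fun pq : Fin L × Fin L => LamMat A pq.1 pq.2))).toSubring :=
    adjugate_mem_subalgebra _ _ (fun p q => Algebra.subset_adjoin (Set.mem_range_self (p, q))) k l
  exact Dop_zero_of_adjoin _ (by rintro _ ⟨⟨p, q⟩, rfl⟩; exact Dop_Lam hBA j m p q) hmem

lemma Dop_J (c : Fin n → ℂ) : Dop c (Jpoly lam) = MvPolynomial.C (∑ a, lam a * c a) := by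
  unfold Jpoly
  rw [Dop_sum, map_sum]
  exact Finset.sum_congr rfl fun a _ => by rw [Dop_smul, Dop_X, ← map_mul]

lemma sumb_ext (hBA : BAhyp A B) (j : Fin E) (m k : Fin L) (s : Fin E) (z : ℂ) :
    ∑ b, z * (B (li E m) (xi L j) b * A b (li E k) (xi L s))
      = if m = k ∧ j = s then z else 0 := by
  rw [← Finset.mul_sum, hBA_ext hBA j m k s]
  split <;> simp

lemma Dop_S (hBA : BAhyp A B) (hg : ∀ r s, g r s = g s r) (j : Fin E) (m l k : Fin L) :
    Dop (cB B j m) (SMat A g l k)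
      = MvPolynomial.C (1/4 : ℂ) *
          ((if m = k then Vp A g j l else 0) + (if m = l then Vp A g j k else 0)) := by
  unfold SMat
  rw [Dop_smul]
  congr 1
  have expand : ∀ (a b : Fin n) (r s : Fin E),
      Dop (cB B j m) (MvPolynomial.C (g r s * A a (li E l) (xi L r) * A b (li E k) (xi L s))
          * (X a * X b))
        = MvPolynomial.C (g r s * A a (li E l) (xi L r)
              * (B (li E m) (xi L j) b * A b (li E k) (xi L s))) * X a
          + MvPolynomial.C (g r s * A b (li E k) (xi L s)
              * (B (li E m) (xi L j) a * A a (li E l) (xi L r))) * X b := by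
    intro a b r s
    rw [Dop_smul, Dop_mul, Dop_X, Dop_X]
    unfold cB
    simp only [map_mul]
    ring
  rw [Dop_sum]
  have step : ∀ a : Fin n, Dop (cB B j m)
      (∑ b, ∑ r, ∑ s, MvPolynomial.C (g r s * A a (li E l) (xi L r) * A b (li E k) (xi L s))
        * (X a * X b))
      = (∑ b, ∑ r, ∑ s, MvPolynomial.C (g r s * A a (li E l) (xi L r)
            * (B (li E m) (xi L j) b * A b (li E k) (xi L s))) * X a)
        + (∑ b, ∑ r, ∑ s, MvPolynomial.C (g r s * A b (li E k) (xi L s)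
            * (B (li E m) (xi L j) a * A a (li E l) (xi L r))) * X b) := by
    intro a
    rw [Dop_sum, ← Finset.sum_add_distrib]
    refine Finset.sum_congr rfl fun b _ => ?_
    rw [Dop_sum, ← Finset.sum_add_distrib]
    refine Finset.sum_congr rfl fun r _ => ?_
    rw [Dop_sum, ← Finset.sum_add_distrib]
    exact Finset.sum_congr rfl fun s _ => expand a b r s
  rw [Finset.sum_congr rfl fun a _ => step a, Finset.sum_add_distrib]
  congr 1
  · -- T1 = if m = k then Vp A g j l else 0
    have inner : ∀ a : Fin n,
        (∑ b, ∑ r, ∑ s, MvPolynomial.C (g r s * A a (li E l) (xi L r)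
            * (B (li E m) (xi L j) b * A b (li E k) (xi L s))) * X a)
          = if m = k then ∑ r, MvPolynomial.C (g r j * A a (li E l) (xi L r)) * X a else 0 := by
      intro a
      rw [Finset.sum_comm]
      have hr : ∀ r : Fin E, (∑ b, ∑ s, MvPolynomial.C (g r s * A a (li E l) (xi L r)
            * (B (li E m) (xi L j) b * A b (li E k) (xi L s))) * X a)
          = if m = k then MvPolynomial.C (g r j * A a (li E l) (xi L r)) * X a else 0 := by
        intro r
        rw [Finset.sum_comm]
        have hs : ∀ s : Fin E, (∑ b, MvPolynomial.C (g r s * A a (li E l) (xi L r)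
              * (B (li E m) (xi L j) b * A b (li E k) (xi L s))) * X a)
            = if m = k ∧ j = s then MvPolynomial.C (g r s * A a (li E l) (xi L r)) * X a else 0 := by
          intro s
          rw [← Finset.sum_mul, ← map_sum, sumb_ext hBA j m k s]
          split <;> simp
        rw [Finset.sum_congr rfl fun s _ => hs s]
        simp only [ite_and]
        split
        · rw [Finset.sum_ite_eq univ j
            (fun s => MvPolynomial.C (g r s * A a (li E l) (xi L r)) * X a), if_pos (mem_univ j)]
        · simp
      rw [Finset.sum_congr rfl fun r _ => hr r]
      split <;> simp
    rw [Finset.sum_congr rfl fun a _ => inner a]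
    split
    · rw [Vp, Finset.sum_comm]
      exact Finset.sum_congr rfl fun r _ => Finset.sum_congr rfl fun a _ => by rw [hg j r]
    · simp
  · -- T2 = if m = l then Vp A g j k else 0
    rw [Finset.sum_comm]
    have inner : ∀ b : Fin n,
        (∑ a, ∑ r, ∑ s, MvPolynomial.C (g r s * A b (li E k) (xi L s)
            * (B (li E m) (xi L j) a * A a (li E l) (xi L r))) * X b)
          = if m = l then ∑ s, MvPolynomial.C (g j s * A b (li E k) (xi L s)) * X b else 0 := by
      intro b
      rw [Finset.sum_comm]
      have hr : ∀ r : Fin E, (∑ a, ∑ s, MvPolynomial.C (g r s * A b (li E k) (xi L s)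
            * (B (li E m) (xi L j) a * A a (li E l) (xi L r))) * X b)
          = if m = l ∧ j = r then ∑ s, MvPolynomial.C (g r s * A b (li E k) (xi L s)) * X b
            else 0 := by
        intro r
        rw [Finset.sum_comm]
        have hs : ∀ s : Fin E, (∑ a, MvPolynomial.C (g r s * A b (li E k) (xi L s)
              * (B (li E m) (xi L j) a * A a (li E l) (xi L r))) * X b)
            = if m = l ∧ j = r then MvPolynomial.C (g r s * A b (li E k) (xi L s)) * X b else 0 := by
          intro s
          rw [← Finset.sum_mul, ← map_sum, sumb_ext hBA j m l r]
          split <;> simp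
        rw [Finset.sum_congr rfl fun s _ => hs s]
        split <;> simp
      rw [Finset.sum_congr rfl fun r _ => hr r]
      simp only [ite_and]
      split
      · rw [Finset.sum_ite_eq univ j
          (fun r => ∑ s, MvPolynomial.C (g r s * A b (li E k) (xi L s)) * X b), if_pos (mem_univ j)]
      · simp
    rw [Finset.sum_congr rfl fun b _ => inner b]
    split
    · rw [Vp]
      exact Finset.sum_comm
    · simp

lemma kd_li (m i : Fin L) : kd (li E m) (li E i) = kd m i := by
  unfold kd
  congr 1
  simp [Fin.ext_iff]

lemma kd_symm {α : Type*} [DecidableEq α] (p q : α) : kd p q = kd q p := by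
  unfold kd
  simp [eq_comm]

lemma Lam_symm (hA : ∀ a i j, A a i j = A a j i) (p q : Fin L) :
    LamMat A p q = LamMat A q p := by
  unfold LamMat
  rw [kd_symm]
  congr 1
  exact Finset.sum_congr rfl fun a _ => by rw [hA]

lemma adj_symm (hA : ∀ a i j, A a i j = A a j i) (k m : Fin L) :
    (LamMat A).adjugate k m = (LamMat A).adjugate m k := by
  have ht : (LamMat A).transpose = LamMat A := Matrix.ext fun p q => Lam_symm hA q p
  conv_lhs => rw [← ht, ← Matrix.adjugate_transpose]
  rfl

lemma Cc_ext (b : Fin n) (i : Fin L) (a : Fin n) (j : Fin E) :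
    Cc A B b i a (xi L j)
      = ∑ m : Fin L, A a (li E i) (li E m) * B (li E m) (xi L j) b
          * (1 + kd (li E m) (li E i)) := by
  unfold Cc
  rw [if_neg (by simp)]
  rw [Finset.sum_filter, Fin.sum_univ_add]
  have h2 : ∀ m : Fin E, (if ((Fin.natAdd L m : Fin (L+E)) : ℕ) < L then
      A a (li E i) (Fin.natAdd L m) * B (Fin.natAdd L m) (xi L j) b
        * (1 + kd (Fin.natAdd L m) (li E i)) else 0) = 0 := fun m => by
    rw [if_neg (by simp)]
  rw [Finset.sum_congr rfl fun m _ => h2 m]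
  simp only [Finset.sum_const_zero, add_zero]
  refine Finset.sum_congr rfl fun m _ => ?_
  rw [if_pos (by simpa using m.isLt)]

lemma sum_LamCoeff (i m : Fin L) :
    ∑ a, MvPolynomial.C (A a (li E i) (li E m) * (1 + kd (li E m) (li E i))) * X a
      = MvPolynomial.C (-2 : ℂ) * LamMat A i m := by
  unfold LamMat
  rw [← mul_assoc, ← map_mul]
  have h2 : (-2 : ℂ) * (-(1 + kd i m) / 2) = 1 + kd i m := by ring
  rw [h2, Finset.mul_sum]
  refine Finset.sum_congr rfl fun a _ => ?_
  rw [← mul_assoc, ← map_mul]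
  congr 2
  rw [kd_li, kd_symm]
  ring

lemma DG (hBA : BAhyp A B) (hA : ∀ a i j, A a i j = A a j i) (hg : ∀ r s, g r s = g s r)
    (j : Fin E) (m : Fin L) :
    ∑ b, MvPolynomial.C (cB B j m b) *
        (MvPolynomial.pderiv b (Gpoly A g lam) - MvPolynomial.C (lam b) * (LamMat A).det)
      = MvPolynomial.C (1/2 : ℂ) * ∑ k, (LamMat A).adjugate k m * Vp A g j k := by
  have split1 : ∑ b, MvPolynomial.C (cB B j m b) *
      (MvPolynomial.pderiv b (Gpoly A g lam) - MvPolynomial.C (lam b) * (LamMat A).det)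
      = Dop (cB B j m) (Gpoly A g lam)
        - MvPolynomial.C (∑ b, cB B j m b * lam b) * (LamMat A).det := by
    rw [Dop, map_sum, Finset.sum_mul, ← Finset.sum_sub_distrib]
    exact Finset.sum_congr rfl fun b _ => by rw [map_mul]; ring
  rw [split1]
  have hG : Dop (cB B j m) (Gpoly A g lam)
      = (∑ k, ∑ l, (LamMat A).adjugate k l * Dop (cB B j m) (SMat A g l k))
        + MvPolynomial.C (∑ b, cB B j m b * lam b) * (LamMat A).det := by
    unfold Gpoly Fpoly
    rw [Dop_add, Dop_add, Dop_det hBA, Dop_mul, Dop_det hBA, Dop_J, Dop_sum]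
    have hterm : ∀ k : Fin L, Dop (cB B j m) (∑ l, (LamMat A).adjugate k l * SMat A g l k)
        = ∑ l, (LamMat A).adjugate k l * Dop (cB B j m) (SMat A g l k) := fun k => by
      rw [Dop_sum]
      refine Finset.sum_congr rfl fun l _ => ?_
      rw [Dop_mul, Dop_adj hBA]
      ring
    rw [Finset.sum_congr rfl fun k _ => hterm k]
    have hc : (∑ a, lam a * cB B j m a) = ∑ b, cB B j m b * lam b :=
      Finset.sum_congr rfl fun a _ => mul_comm _ _
    rw [hc]
    ring
  rw [hG, add_sub_cancel_right]
  have hDS : ∀ k l : Fin L, (LamMat A).adjugate k l * Dop (cB B j m) (SMat A g l k)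
      = MvPolynomial.C (1/4 : ℂ) *
          ((if m = k then (LamMat A).adjugate k l * Vp A g j l else 0)
            + (if m = l then (LamMat A).adjugate k l * Vp A g j k else 0)) := fun k l => by
    rw [Dop_S hBA hg]
    split <;> split <;> simp <;> ring
  rw [Finset.sum_congr rfl fun k _ => Finset.sum_congr rfl fun l _ => hDS k l]
  simp only [mul_add, mul_ite, mul_zero, Finset.sum_add_distrib]
  have pull1 : ∀ k : Fin L, (∑ l, if m = k then
      MvPolynomial.C (1/4:ℂ) * ((LamMat A).adjugate k l * Vp A g j l) else 0)
      = if m = k then ∑ l, MvPolynomial.C (1/4:ℂ) * ((LamMat A).adjugate k l * Vp A g j l)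
        else 0 := fun k => by split <;> simp
  rw [Finset.sum_congr rfl fun k _ => pull1 k, Finset.sum_ite_eq univ m _,
    if_pos (Finset.mem_univ m)]
  have pull2 : ∀ k : Fin L, (∑ l, if m = l then
      MvPolynomial.C (1/4:ℂ) * ((LamMat A).adjugate k l * Vp A g j k) else 0)
      = MvPolynomial.C (1/4:ℂ) * ((LamMat A).adjugate k m * Vp A g j k) := fun k => by
    rw [Finset.sum_ite_eq univ m _, if_pos (Finset.mem_univ m)]
  rw [Finset.sum_congr rfl fun k _ => pull2 k]
  have hsymm : ∀ l : Fin L, MvPolynomial.C (1/4:ℂ) * ((LamMat A).adjugate m l * Vp A g j l)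
      = MvPolynomial.C (1/4:ℂ) * ((LamMat A).adjugate l m * Vp A g j l) := fun l => by
    rw [adj_symm hA]
  rw [Finset.sum_congr rfl fun l _ => hsymm l]
  rw [← two_mul, ← Finset.mul_sum, ← mul_assoc]
  congr 1
  rw [← map_ofNat (MvPolynomial.C (σ := Fin n) (R := ℂ)) 2, ← map_mul]
  norm_num

end Main

/-- Lemma A.2 / Corollary 2.16, case `i ≤ L < j ≤ M`: the momentum-space IBP operators
are parametric annihilators, in the form of the polynomial identity
`Σ_{a,b} C^{bi}_{aj} x_a (∂_b 𝒢 − λ_b·𝒰) = −𝒰·Σ_a Σ_{m>L} A_a^{{i,m}} g_{jm} x_a`. -/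
theorem stmt_11 {L E n : ℕ} (hL : 1 ≤ L) (hE : 1 ≤ E)
    (A : Fin n → Fin (L + E) → Fin (L + E) → ℂ)
    (B : Fin (L + E) → Fin (L + E) → Fin n → ℂ)
    (g : Fin E → Fin E → ℂ) (lam : Fin n → ℂ)
    (hAsymm : ∀ a i j, A a i j = A a j i)
    (hBsymm : ∀ i j b, B i j b = B j i b)
    (hgsymm : ∀ r s, g r s = g s r)
    (hn : n = L * (L + 1) / 2 + L * E)
    (hBA : ∀ i j k l : Fin (L + E), ((i : ℕ) < L ∨ (j : ℕ) < L) →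
      ((k : ℕ) < L ∨ (l : ℕ) < L) →
      ∑ a, B i j a * A a k l = if (i = k ∧ j = l) ∨ (i = l ∧ j = k) then 1 else 0)
    (hAB : ∀ a b : Fin n,
      (∑ i ∈ univ.filter (fun i : Fin (L + E) => (i : ℕ) < L),
        ∑ j ∈ univ.filter (fun j : Fin (L + E) => i ≤ j), A a i j * B i j b)
        = if a = b then 1 else 0)
    (i : Fin L) (j : Fin E) :
    ∑ a, ∑ b, MvPolynomial.C (Cc A B b i a (xi L j)) * MvPolynomial.X a *
        (MvPolynomial.pderiv b (Gpoly A g lam) - MvPolynomial.C (lam b) * (LamMat A).det)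
      = -((LamMat A).det *
          ∑ a, ∑ m, MvPolynomial.C (A a (li E i) (xi L m) * g j m) * MvPolynomial.X a) := by

  classical
  have hBA' : BAhyp A B := hBA
  have step1 : ∀ a b : Fin n, MvPolynomial.C (Cc A B b i a (xi L j)) * MvPolynomial.X a *
        (MvPolynomial.pderiv b (Gpoly A g lam) - MvPolynomial.C (lam b) * (LamMat A).det)
      = ∑ m : Fin L,
          (MvPolynomial.C (A a (li E i) (li E m) * (1 + kd (li E m) (li E i)))
              * MvPolynomial.X a)
            * (MvPolynomial.C (cB B j m b) *
              (MvPolynomial.pderiv b (Gpoly A g lam)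
                - MvPolynomial.C (lam b) * (LamMat A).det)) := by
    intro a b
    rw [Cc_ext, map_sum, Finset.sum_mul, Finset.sum_mul]
    refine Finset.sum_congr rfl fun m _ => ?_
    simp only [map_mul]
    unfold cB
    ring
  rw [Finset.sum_congr rfl fun a _ => Finset.sum_congr rfl fun b _ => step1 a b]
  have swap : ∀ (f : Fin n → Fin L → MvPolynomial (Fin n) ℂ)
      (h : Fin L → Fin n → MvPolynomial (Fin n) ℂ),
      (∑ a : Fin n, ∑ b : Fin n, ∑ m : Fin L, f a m * h m b)
        = ∑ m : Fin L, (∑ a, f a m) * (∑ b, h m b) := by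
    intro f h
    have h1 : ∀ a : Fin n, (∑ b : Fin n, ∑ m : Fin L, f a m * h m b)
        = ∑ m : Fin L, ∑ b : Fin n, f a m * h m b := fun a => Finset.sum_comm
    rw [Finset.sum_congr rfl fun a _ => h1 a, Finset.sum_comm]
    exact Finset.sum_congr rfl fun m _ => (Finset.sum_mul_sum _ _ _ _).symm
  rw [swap]
  rw [Finset.sum_congr rfl fun m _ => by rw [sum_LamCoeff, DG hBA' hAsymm hgsymm]]
  have hm1 : (MvPolynomial.C (-2 : ℂ) : MvPolynomial (Fin n) ℂ) * MvPolynomial.C (1/2 : ℂ)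
      = -1 := by
    rw [← map_mul]
    norm_num
  have step3 : ∀ m : Fin L,
      (MvPolynomial.C (-2 : ℂ) * LamMat A i m) *
        (MvPolynomial.C (1/2 : ℂ) * ∑ k, (LamMat A).adjugate k m * Vp A g j k)
      = ∑ k, -(LamMat A i m * (LamMat A).adjugate k m * Vp A g j k) := by
    intro m
    simp only [Finset.mul_sum]
    refine Finset.sum_congr rfl fun k _ => ?_
    linear_combination (LamMat A i m * (LamMat A).adjugate k m * Vp A g j k) * hm1
  rw [Finset.sum_congr rfl fun m _ => step3 m, Finset.sum_comm]
  have step4 : ∀ k : Fin L,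
      (∑ m, -(LamMat A i m * (LamMat A).adjugate k m * Vp A g j k))
      = -((if i = k then (LamMat A).det else 0) * Vp A g j k) := by
    intro k
    rw [Finset.sum_neg_distrib]
    congr 1
    have : ∀ m : Fin L, LamMat A i m * (LamMat A).adjugate k m * Vp A g j k
        = (LamMat A i m * (LamMat A).adjugate m k) * Vp A g j k := fun m => by
      rw [adj_symm hAsymm]
    rw [Finset.sum_congr rfl fun m _ => this m, ← Finset.sum_mul]
    congr 1
    have hmul : ∑ m, LamMat A i m * (LamMat A).adjugate m k
        = (LamMat A * (LamMat A).adjugate) i k := (Matrix.mul_apply).symm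
    rw [hmul, Matrix.mul_adjugate, Matrix.smul_apply, Matrix.one_apply, smul_eq_mul]
    split <;> simp
  rw [Finset.sum_congr rfl fun k _ => step4 k]
  simp only [ite_mul, zero_mul, Finset.sum_neg_distrib]
  rw [Finset.sum_ite_eq univ i (fun k => (LamMat A).det * Vp A g j k), if_pos (Finset.mem_univ i)]
  congr 1
  unfold Vp
  rw [Finset.sum_comm]
  congr 1
  refine Finset.sum_congr rfl fun a _ => Finset.sum_congr rfl fun m _ => ?_
  rw [mul_comm (g j m)]

end
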